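/- Let 0 < q < 1 and u > 0, and define h_u : ℝ → ℝ by h_u(t) = |t|^q if |t| ≥ u^{1/(q−1)} and h_u(t) = q·u·|t| + (1−q)·u^{q/(q−1)} otherwise. Then h_u is Lipschitz continuous with constant q·u: |h_u(t₁) − h_u(t₂)| ≤ q·u·|t₁ − t₂| for all t₁, t₂ ∈ ℝ. -/

import Mathlib

/-- Index for the ℓ_r norm with r ∈ {1, 2, ∞}. -/
inductive LrIndex : Type
  | one | two | inf

/-- The ℓ_r norm on ℝ^n for r ∈ {1, 2, ∞}. -/
noncomputable def lrNorm {n : ℕ} (r : LrIndex) (z : Fin n → ℝ) : ℝ :=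
  match r with
  | .one => ∑ j, |z j|
  | .two => Real.sqrt (∑ j, (z j) ^ 2)
  | .inf => ⨆ j, |z j|

/-- `v` is a subgradient of `z ↦ ‖z − y‖_r` at `z₀`. -/
def IsSubgradAt {n : ℕ} (r : LrIndex) (y v z₀ : Fin n → ℝ) : Prop :=
  ∀ z : Fin n → ℝ,
    lrNorm r (z₀ - y) + ∑ j, v j * (z j - z₀ j) ≤ lrNorm r (z - y)

/-- The ε-approximation h_u of t ↦ |t|^q. -/
noncomputable def hApprox (q u t : ℝ) : ℝ :=
  if u ^ (1 / (q - 1)) ≤ |t| then |t| ^ q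
  else q * u * |t| + (1 - q) * u ^ (q / (q - 1))

lemma hApprox_abs (q u t : ℝ) : hApprox q u t = hApprox q u |t| := by
  simp [hApprox, abs_abs]

lemma rpow_lip (q u : ℝ) (hq0 : 0 < q) (hq1 : q < 1) (hu : 0 < u) (a b : ℝ)
    (hb : u ^ (1 / (q - 1)) ≤ b) (hba : b ≤ a) :
    |a ^ q - b ^ q| ≤ q * u * (a - b) := by
  set c := u ^ (1 / (q - 1)) with hc_def
  have hc : 0 < c := Real.rpow_pos_of_pos hu _
  have hq1' : q - 1 ≠ 0 := sub_ne_zero.mpr hq1.ne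
  have hcq : c ^ (q - 1) = u := by
    rw [hc_def, ← Real.rpow_mul hu.le, one_div, inv_mul_cancel₀ hq1', Real.rpow_one]
  have key := Convex.norm_image_sub_le_of_norm_hasDerivWithin_le
    (f := fun x : ℝ => x ^ q) (f' := fun x : ℝ => q * x ^ (q - 1)) (s := Set.Ici c)
    (fun x hx => (Real.hasDerivAt_rpow_const
      (Or.inl (ne_of_gt (lt_of_lt_of_le hc hx)))).hasDerivWithinAt)
    (fun x hx => by
      have hx0 : (0:ℝ) < x := lt_of_lt_of_le hc hx
      have h1 : x ^ (q - 1) ≤ u := by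
        rw [← hcq]
        exact Real.rpow_le_rpow_of_nonpos hc hx (by linarith)
      have h2 : (0:ℝ) ≤ q * x ^ (q - 1) :=
        mul_nonneg hq0.le (Real.rpow_nonneg hx0.le _)
      rw [Real.norm_eq_abs, abs_of_nonneg h2]
      exact mul_le_mul_of_nonneg_left h1 hq0.le)
    (convex_Ici c) (Set.mem_Ici.mpr hb) (Set.mem_Ici.mpr (hb.trans hba))
  simpa [Real.norm_eq_abs, abs_of_nonneg (sub_nonneg.mpr hba)] using key

lemma hApprox_lip_nonneg (q u : ℝ) (hq0 : 0 < q) (hq1 : q < 1) (hu : 0 < u)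
    (a b : ℝ) (hb0 : 0 ≤ b) (hba : b ≤ a) :
    |hApprox q u a - hApprox q u b| ≤ q * u * (a - b) := by
  set c := u ^ (1 / (q - 1)) with hc_def
  have hc : 0 < c := Real.rpow_pos_of_pos hu _
  have hq1' : q - 1 ≠ 0 := sub_ne_zero.mpr hq1.ne
  have hqu : 0 < q * u := mul_pos hq0 hu
  have ha0 : 0 ≤ a := hb0.trans hba
  -- value matching at c
  have hA : c ^ q = u ^ (q / (q - 1)) := by
    rw [hc_def, ← Real.rpow_mul hu.le]
    congr 1
    field_simp
  have huc : u * c = u ^ (q / (q - 1)) := by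
    have he : (1:ℝ) + 1 / (q - 1) = q / (q - 1) := by field_simp; ring
    rw [hc_def, ← he, Real.rpow_add hu, Real.rpow_one]
  have key0 : c ^ q = q * u * c + (1 - q) * u ^ (q / (q - 1)) := by
    rw [hA, mul_assoc, huc]; ring
  rw [hApprox, hApprox, abs_of_nonneg ha0, abs_of_nonneg hb0]
  by_cases hcb : c ≤ b
  · rw [if_pos (hcb.trans hba), if_pos hcb]
    exact rpow_lip q u hq0 hq1 hu a b hcb hba
  · by_cases hca : c ≤ a
    · rw [if_pos hca, if_neg hcb]
      have h1 := rpow_lip q u hq0 hq1 hu a c le_rfl hca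
      rw [abs_le] at h1 ⊢
      push_neg at hcb
      constructor <;> nlinarith [h1.1, h1.2]
    · rw [if_neg hca, if_neg hcb]
      have : q * u * a + (1 - q) * u ^ (q / (q - 1)) -
          (q * u * b + (1 - q) * u ^ (q / (q - 1))) = q * u * (a - b) := by ring
      rw [this, abs_of_nonneg (by nlinarith)]

/-- h_u is Lipschitz continuous with constant q·u. -/
theorem hApprox_lipschitz (q u : ℝ) (hq0 : 0 < q) (hq1 : q < 1) (hu : 0 < u) :
    ∀ t₁ t₂ : ℝ, |hApprox q u t₁ - hApprox q u t₂| ≤ q * u * |t₁ - t₂| := by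
  intro t₁ t₂
  have hqu : 0 ≤ q * u := le_of_lt (mul_pos hq0 hu)
  rw [hApprox_abs q u t₁, hApprox_abs q u t₂]
  rcases le_total |t₂| |t₁| with h | h
  · refine (hApprox_lip_nonneg q u hq0 hq1 hu _ _ (abs_nonneg _) h).trans ?_
    exact mul_le_mul_of_nonneg_left (by
      have := abs_sub_abs_le_abs_sub t₁ t₂; linarith) hqu
  · rw [abs_sub_comm]
    refine (hApprox_lip_nonneg q u hq0 hq1 hu _ _ (abs_nonneg _) h).trans ?_
    refine mul_le_mul_of_nonneg_left ?_ hqu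
    have := abs_sub_abs_le_abs_sub t₂ t₁
    rw [abs_sub_comm] at this
    linarith
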